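/- The pairs of twins in the cluster graph for n-permutations partition into disjoint directed cycles (in the graph whose edges are double edges), and any such cycle passes through exactly n−1 distinct clusters. -/

import Mathlib

/-- `reduce w` replaces each copy of the i-th smallest value of `w` by `i`. -/
def reduce {m : ℕ} (w : Fin m → ℕ) : Fin m → ℕ :=
  fun i => ((Finset.univ.image w).filter (fun v => v ≤ w i)).card

namespace DEFC

open Finset Equiv Function

variable {m : ℕ}

lemma reduce_apply_of_injective (w : Fin m → ℕ) (hw : Injective w) (i : Fin m) :
    reduce w i = (Finset.univ.filter fun j => w j ≤ w i).card := by
  unfold reduce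
  rw [show (Finset.univ.image w).filter (fun v => v ≤ w i)
      = (Finset.univ.filter fun j => w j ≤ w i).image w by
    ext v
    simp only [Finset.mem_filter, Finset.mem_image, Finset.mem_univ, true_and]
    constructor
    · rintro ⟨⟨j, rfl⟩, h⟩; exact ⟨j, h, rfl⟩
    · rintro ⟨j, h, rfl⟩; exact ⟨⟨j, rfl⟩, h⟩]
  exact Finset.card_image_of_injective _ hw

lemma card_filter_le_perm (σ : Equiv.Perm (Fin m)) (a : Fin m) :
    (Finset.univ.filter fun j => σ j ≤ σ a).card = (σ a : ℕ) + 1 := by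
  rw [← Fin.card_Iic (σ a)]
  apply Finset.card_bij (fun j _ => σ j)
  · intro j hj
    simp only [Finset.mem_filter, Finset.mem_univ, true_and] at hj
    simpa using hj
  · intro j _ j' _ h
    exact σ.injective h
  · intro v hv
    exact ⟨σ.symm v, by simpa using Finset.mem_Iic.mp hv, by simp⟩

lemma reduce_pattern (w : Fin m → ℕ) (σ : Equiv.Perm (Fin m))
    (h : ∀ i j, w i ≤ w j ↔ σ i ≤ σ j) :
    reduce w = fun i => (σ i : ℕ) + 1 := by
  have hw : Injective w := by
    intro i j hij
    exact σ.injective (le_antisymm ((h i j).mp hij.le) ((h j i).mp hij.ge))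
  funext i
  rw [reduce_apply_of_injective w hw i, ← card_filter_le_perm σ i]
  congr 1
  ext j
  simp [h j i]

lemma val_succAbove {m : ℕ} (p : Fin (m + 2)) (i : Fin (m + 1)) :
    (p.succAbove i : ℕ) = if i.val < p.val then i.val else i.val + 1 := by
  rw [Fin.succAbove]
  by_cases h : (i : ℕ) < p.val
  · rw [if_pos (by simpa [Fin.lt_def] using h), if_pos h]; rfl
  · rw [if_neg (by simpa [Fin.lt_def] using h), if_neg h]; rfl


/-- The permutation of `Fin (m+2)` whose word has prefix pattern `σ` and last value `k`. -/
def Fn (σ : Equiv.Perm (Fin (m + 1))) (k : Fin (m + 2)) : Fin (m + 2) → Fin (m + 2) :=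
  Fin.snoc (fun i => k.succAbove (σ i)) k

lemma Fn_castSucc (σ : Equiv.Perm (Fin (m + 1))) (k : Fin (m + 2)) (i : Fin (m + 1)) :
    Fn σ k (Fin.castSucc i) = k.succAbove (σ i) := Fin.snoc_castSucc _ _ _

lemma Fn_last (σ : Equiv.Perm (Fin (m + 1))) (k : Fin (m + 2)) :
    Fn σ k (Fin.last (m + 1)) = k := Fin.snoc_last _ _

lemma Fn_bijective (σ : Equiv.Perm (Fin (m + 1))) (k : Fin (m + 2)) :
    Function.Bijective (Fn σ k) := by
  have hsurj : Function.Surjective (Fn σ k) := by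
    intro v
    rcases eq_or_ne v k with rfl | hv
    · exact ⟨Fin.last _, Fn_last σ v⟩
    · obtain ⟨l, hl⟩ := Fin.exists_succAbove_eq hv
      exact ⟨Fin.castSucc (σ.symm l), by rw [Fn_castSucc, Equiv.apply_symm_apply, hl]⟩
  exact ⟨Finite.injective_iff_surjective.mpr hsurj, hsurj⟩

noncomputable def Px (σ : Equiv.Perm (Fin (m + 1))) (k : Fin (m + 2)) :
    Equiv.Perm (Fin (m + 2)) :=
  Equiv.ofBijective _ (Fn_bijective σ k)

lemma Px_castSucc (σ : Equiv.Perm (Fin (m + 1))) (k : Fin (m + 2)) (i : Fin (m + 1)) :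
    Px σ k (Fin.castSucc i) = k.succAbove (σ i) := Fn_castSucc σ k i

lemma Px_last (σ : Equiv.Perm (Fin (m + 1))) (k : Fin (m + 2)) :
    Px σ k (Fin.last (m + 1)) = k := Fn_last σ k

lemma Px_succ (σ : Equiv.Perm (Fin (m + 1))) (k : Fin (m + 2))
    (hk : k = Fin.castSucc (σ 0) ∨ k = Fin.succ (σ 0)) (j : Fin (m + 1)) :
    Px σ k (Fin.succ j) = (k.succAbove (σ 0)).succAbove (σ (finRotate (m + 1) j)) := by
  rcases eq_or_ne j (Fin.last m) with rfl | hj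
  · rw [Fin.succ_last, Px_last, finRotate_last]
    apply Fin.val_injective
    rcases hk with rfl | rfl <;>
      simp only [val_succAbove, Fin.coe_castSucc, Fin.val_succ] <;> split_ifs <;> omega
  · have hjlt : (j : ℕ) < m := by
      have := j.isLt
      rcases Nat.lt_or_ge (j : ℕ) m with h | h
      · exact h
      · exact absurd (Fin.ext (by omega : (j : ℕ) = m)) hj
    have hrot : finRotate (m + 1) j = ⟨(j : ℕ) + 1, by omega⟩ := by
      apply Fin.val_injective
      rw [coe_finRotate_of_ne_last hj]
    have hsucc : Fin.succ j = Fin.castSucc (⟨(j : ℕ) + 1, by omega⟩ : Fin (m + 1)) := rfl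
    rw [hsucc, Px_castSucc, hrot]
    set v : Fin (m + 1) := σ ⟨(j : ℕ) + 1, by omega⟩ with hv
    have hvne : v ≠ σ 0 := by
      intro h
      have := σ.injective h
      exact absurd (congrArg Fin.val this) (by simp)
    have hvne' : (v : ℕ) ≠ (σ 0 : ℕ) := fun h => hvne (Fin.val_injective h)
    apply Fin.val_injective
    rcases hk with rfl | rfl <;>
      simp only [val_succAbove, Fin.coe_castSucc, Fin.val_succ] <;> split_ifs <;> omega


lemma reduce_first_Px (σ : Equiv.Perm (Fin (m + 1))) (k : Fin (m + 2)) :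
    reduce (fun i : Fin (m + 1) => (Px σ k (Fin.castSucc i) : ℕ) + 1)
      = fun i => (σ i : ℕ) + 1 := by
  apply reduce_pattern
  intro i j
  rw [Px_castSucc, Px_castSucc, Nat.add_le_add_iff_right, ← Fin.le_def,
    Fin.succAbove_le_succAbove_iff]

lemma reduce_last_Px (σ : Equiv.Perm (Fin (m + 1))) (k : Fin (m + 2))
    (hk : k = Fin.castSucc (σ 0) ∨ k = Fin.succ (σ 0)) :
    reduce (fun i : Fin (m + 1) => (Px σ k (Fin.succ i) : ℕ) + 1)
      = fun i => ((σ * finRotate (m + 1)) i : ℕ) + 1 := by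
  apply reduce_pattern
  intro i j
  rw [Px_succ σ k hk, Px_succ σ k hk, Nat.add_le_add_iff_right, ← Fin.le_def,
    Fin.succAbove_le_succAbove_iff]
  exact Iff.rfl

lemma rank_inj {M : ℕ} (S : Finset (Fin M)) {a b : Fin M} (ha : a ∈ S) (hb : b ∈ S)
    (h : (S.filter (fun v => v ≤ a)).card = (S.filter (fun v => v ≤ b)).card) : a = b := by
  have key : ∀ a b : Fin M, b ∈ S → a < b →
      (S.filter (fun v => v ≤ a)).card < (S.filter (fun v => v ≤ b)).card := by
    intro a b hb hab
    apply Finset.card_lt_card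
    rw [Finset.ssubset_def]
    constructor
    · intro v hv
      simp only [Finset.mem_filter] at hv ⊢
      exact ⟨hv.1, hv.2.trans hab.le⟩
    · intro hsub
      have := hsub (Finset.mem_filter.mpr ⟨hb, le_refl b⟩)
      simp only [Finset.mem_filter] at this
      exact absurd this.2 (not_le.mpr hab)
  rcases lt_trichotomy a b with hab | hab | hab
  · exact absurd h (Nat.ne_of_lt (key a b hb hab))
  · exact hab
  · exact absurd h.symm (Nat.ne_of_lt (key b a ha hab))

lemma prefix_eq (x : Equiv.Perm (Fin (m + 2))) (σ : Equiv.Perm (Fin (m + 1)))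
    (hred : reduce (fun i : Fin (m + 1) => (x (Fin.castSucc i) : ℕ) + 1)
      = fun i => (σ i : ℕ) + 1) (i : Fin (m + 1)) :
    x (Fin.castSucc i) = (x (Fin.last (m + 1))).succAbove (σ i) := by
  set k := x (Fin.last (m + 1)) with hkdef
  set P : Fin (m + 1) → Fin (m + 2) := fun i => x (Fin.castSucc i) with hPdef
  set Q : Fin (m + 1) → Fin (m + 2) := fun i => k.succAbove (σ i) with hQdef
  have hPinj : Function.Injective P := fun a b h =>
    Fin.castSucc_injective _ (x.injective h)
  have hQinj : Function.Injective Q := fun a b h =>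
    σ.injective (Fin.succAbove_right_injective h)
  set S : Finset (Fin (m + 2)) := Finset.univ.erase k with hSdef
  have hScard : S.card = m + 1 := by
    rw [hSdef, Finset.card_erase_of_mem (Finset.mem_univ k)]
    simp
  have hPmem : ∀ i, P i ∈ S := by
    intro i
    refine Finset.mem_erase.mpr ⟨fun h => ?_, Finset.mem_univ _⟩
    exact absurd (x.injective h) (Fin.ne_of_lt (Fin.castSucc_lt_last i))
  have hQmem : ∀ i, Q i ∈ S :=
    fun i => Finset.mem_erase.mpr ⟨Fin.succAbove_ne k (σ i), Finset.mem_univ _⟩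
  have himP : Finset.univ.image P = S := by
    apply Finset.eq_of_subset_of_card_le
    · intro v hv
      obtain ⟨i, _, rfl⟩ := Finset.mem_image.mp hv
      exact hPmem i
    · rw [hScard, Finset.card_image_of_injective _ hPinj]
      simp
  have himQ : Finset.univ.image Q = S := by
    apply Finset.eq_of_subset_of_card_le
    · intro v hv
      obtain ⟨i, _, rfl⟩ := Finset.mem_image.mp hv
      exact hQmem i
    · rw [hScard, Finset.card_image_of_injective _ hQinj]
      simp
  have rankP : ∀ i, (S.filter fun v => v ≤ P i).card = (σ i : ℕ) + 1 := by
    intro i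
    have hw : Function.Injective (fun j => (P j : ℕ) + 1) := by
      intro a b h
      exact hPinj (Fin.val_injective (Nat.succ_injective h))
    have h1 := congrFun hred i
    rw [reduce_apply_of_injective _ hw i] at h1
    simp only [Nat.add_le_add_iff_right, ← Fin.le_def] at h1
    rw [← himP, Finset.filter_image, Finset.card_image_of_injective _ hPinj]
    exact h1
  have rankQ : ∀ i, (S.filter fun v => v ≤ Q i).card = (σ i : ℕ) + 1 := by
    intro i
    rw [← himQ, Finset.filter_image, Finset.card_image_of_injective _ hQinj]
    rw [show (Finset.univ.filter fun j => Q j ≤ Q i)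
        = Finset.univ.filter fun j => σ j ≤ σ i by
      apply Finset.filter_congr
      intro j _
      rw [hQdef]
      simp only [Fin.succAbove_le_succAbove_iff]]
    exact card_filter_le_perm σ i
  exact rank_inj S (hPmem i) (hQmem i) ((rankP i).trans (rankQ i).symm)

end DEFC

/-- The first `n-1` letters of a word of length `n`. -/
def firstw {n : ℕ} (w : Fin n → ℕ) : Fin (n - 1) → ℕ :=
  fun i => w (Fin.castLE (Nat.sub_le n 1) i)

/-- The last `n-1` letters of a word of length `n`. -/
def lastw {n : ℕ} (w : Fin n → ℕ) : Fin (n - 1) → ℕ :=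
  fun i => w ⟨i.val + 1, by have := i.isLt; omega⟩

/-- The word (with letters in `{1,…,n}`) associated with a permutation of `[n]`. -/
def permWord {n : ℕ} (x : Equiv.Perm (Fin n)) : Fin n → ℕ := fun i => (x i : ℕ) + 1

/-- The word of a permutation of `[n-1]` indexing a cluster. -/
def clusterWord {n : ℕ} (σ : Equiv.Perm (Fin (n - 1))) : Fin (n - 1) → ℕ :=
  fun i => (σ i : ℕ) + 1

/-- `x` is an edge of the cluster graph from `σ` to `τ`:
`reduce(x₁⋯x_{n-1}) = σ` and `reduce(x₂⋯x_n) = τ`. -/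
def isEdge {n : ℕ} (x : Equiv.Perm (Fin n)) (σ τ : Equiv.Perm (Fin (n - 1))) : Prop :=
  reduce (firstw (permWord x)) = clusterWord σ ∧ reduce (lastw (permWord x)) = clusterWord τ

/-- `x` is a permutation whose first and last entries differ by 1. -/
def isTwinEnd {n : ℕ} (hn : 2 ≤ n) (x : Equiv.Perm (Fin n)) : Prop :=
  (x ⟨0, by omega⟩ : ℕ) + 1 = x ⟨n - 1, by omega⟩ ∨
    (x ⟨n - 1, by omega⟩ : ℕ) + 1 = x ⟨0, by omega⟩

set_option maxHeartbeats 1000000 in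
theorem forward_dir (m : ℕ) (σ τ : Equiv.Perm (Fin (m + 1)))
    (hexi : ∃ x y : Equiv.Perm (Fin (m + 2)), x ≠ y ∧ isEdge x σ τ ∧ isEdge y σ τ ∧
      isTwinEnd (by omega) x ∧ isTwinEnd (by omega) y) :
    Equiv.mulRight (finRotate (m + 1)) σ = τ := by
      obtain ⟨x, y, hxy, ⟨hx1, hx2⟩, -, htx, -⟩ := hexi
      have hx1' : reduce (fun i : Fin (m + 1) => (x (Fin.castSucc i) : ℕ) + 1)
          = fun i => (σ i : ℕ) + 1 := hx1
      have hP := DEFC.prefix_eq x σ hx1'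
      set k := x (Fin.last (m + 1)) with hk
      have h0 : x (Fin.castSucc (0 : Fin (m + 1))) = k.succAbove (σ 0) := hP 0
      have htx' : (x (Fin.castSucc (0 : Fin (m + 1))) : ℕ) + 1 = (k : ℕ) ∨
          (k : ℕ) + 1 = (x (Fin.castSucc (0 : Fin (m + 1))) : ℕ) := htx
      have h0v : (x (Fin.castSucc (0 : Fin (m + 1))) : ℕ) = (k.succAbove (σ 0) : ℕ) :=
        congrArg Fin.val h0
      have hkval : (k : ℕ) = ((σ 0 : Fin (m + 1)) : ℕ) ∨
          (k : ℕ) = ((σ 0 : Fin (m + 1)) : ℕ) + 1 := by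
        have hv := DEFC.val_succAbove k (σ 0)
        rcases htx' with h | h <;> rw [h0v, hv] at h <;> split_ifs at h <;> omega
      have hkk : k = Fin.castSucc (σ 0) ∨ k = Fin.succ (σ 0) := by
        rcases hkval with h | h
        · exact Or.inl (Fin.val_injective (by simpa using h))
        · exact Or.inr (Fin.val_injective (by simpa using h))
      have hxPx : x = DEFC.Px σ k := by
        apply Equiv.ext
        intro j
        induction j using Fin.lastCases with
        | last => rw [DEFC.Px_last]
        | cast i => rw [DEFC.Px_castSucc]; exact hP i
      have hx2' : reduce (fun i : Fin (m + 1) => (x (Fin.succ i) : ℕ) + 1)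
          = fun i => (τ i : ℕ) + 1 := hx2
      rw [hxPx] at hx2'
      have hlast := DEFC.reduce_last_Px σ k hkk
      have hw : (fun i => ((σ * finRotate (m + 1)) i : ℕ) + 1)
          = fun i => (τ i : ℕ) + 1 := hlast.symm.trans hx2'
      show σ * finRotate (m + 1) = τ
      apply Equiv.ext
      intro i
      have := congrFun hw i
      exact Fin.val_injective (by omega)

set_option maxHeartbeats 1000000 in
theorem backward_dir (m : ℕ) (σ τ : Equiv.Perm (Fin (m + 1)))
    (hτ : Equiv.mulRight (finRotate (m + 1)) σ = τ) :
    ∃ x y : Equiv.Perm (Fin (m + 2)), x ≠ y ∧ isEdge x σ τ ∧ isEdge y σ τ ∧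
      isTwinEnd (by omega) x ∧ isTwinEnd (by omega) y := by
      have hτ' : σ * finRotate (m + 1) = τ := hτ
      have e0x : DEFC.Px σ (Fin.succ (σ 0)) (⟨0, by omega⟩ : Fin (m + 2))
          = Fin.castSucc (σ 0) := by
        have h : (⟨0, by omega⟩ : Fin (m + 2)) = Fin.castSucc (0 : Fin (m + 1)) := rfl
        rw [h, DEFC.Px_castSucc]
        apply Fin.val_injective
        rw [DEFC.val_succAbove]
        simp
      have e0y : DEFC.Px σ (Fin.castSucc (σ 0)) (⟨0, by omega⟩ : Fin (m + 2))
          = Fin.succ (σ 0) := by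
        have h : (⟨0, by omega⟩ : Fin (m + 2)) = Fin.castSucc (0 : Fin (m + 1)) := rfl
        rw [h, DEFC.Px_castSucc]
        apply Fin.val_injective
        rw [DEFC.val_succAbove]
        simp
      have e1x : DEFC.Px σ (Fin.succ (σ 0)) (⟨m + 2 - 1, by omega⟩ : Fin (m + 2))
          = Fin.succ (σ 0) := DEFC.Px_last σ _
      have e1y : DEFC.Px σ (Fin.castSucc (σ 0)) (⟨m + 2 - 1, by omega⟩ : Fin (m + 2))
          = Fin.castSucc (σ 0) := DEFC.Px_last σ _
      have hne : DEFC.Px σ (Fin.succ (σ 0)) ≠ DEFC.Px σ (Fin.castSucc (σ 0)) := by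
        intro h
        have h0 := congrArg (fun e : Equiv.Perm (Fin (m + 2)) => e (Fin.last (m + 1))) h
        simp only [DEFC.Px_last] at h0
        have hv := congrArg Fin.val h0
        simp only [Fin.val_succ, Fin.coe_castSucc] at hv
        omega
      refine ⟨DEFC.Px σ (Fin.succ (σ 0)), DEFC.Px σ (Fin.castSucc (σ 0)), hne, ⟨?_, ?_⟩,
        ⟨?_, ?_⟩, ?_, ?_⟩
      · exact DEFC.reduce_first_Px σ (Fin.succ (σ 0))
      · show reduce _ = clusterWord (n := m + 2) τ
        rw [← hτ']
        exact DEFC.reduce_last_Px σ (Fin.succ (σ 0)) (Or.inr rfl)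
      · exact DEFC.reduce_first_Px σ (Fin.castSucc (σ 0))
      · show reduce _ = clusterWord (n := m + 2) τ
        rw [← hτ']
        exact DEFC.reduce_last_Px σ (Fin.castSucc (σ 0)) (Or.inl rfl)
      · exact Or.inl (by rw [e0x, e1x]; simp)
      · exact Or.inr (by rw [e0y, e1y]; simp)

open Fin.NatCast in
set_option maxHeartbeats 1000000 in
theorem power_part (m : ℕ) (σ : Equiv.Perm (Fin (m + 1))) :
    ((Equiv.mulRight (finRotate (m + 1))) ^ (m + 1)) σ = σ ∧
      ∀ p : ℕ, 0 < p → p < m + 1 → ((Equiv.mulRight (finRotate (m + 1))) ^ p) σ ≠ σ := by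
    have hpow : ∀ (p : ℕ) (σ : Equiv.Perm (Fin (m + 1))),
        ((Equiv.mulRight (finRotate (m + 1))) ^ p) σ = σ * (finRotate (m + 1)) ^ p := by
      intro p
      induction p with
      | zero => intro σ; simp
      | succ p ih =>
        intro σ
        rw [pow_succ', Equiv.Perm.mul_apply, ih]
        show (σ * (finRotate (m + 1)) ^ p) * finRotate (m + 1)
            = σ * (finRotate (m + 1)) ^ (p + 1)
        rw [pow_succ, mul_assoc]
    have hrotpow : ∀ (p : ℕ) (j : Fin (m + 1)),
        ((finRotate (m + 1)) ^ p) j = j + (p : Fin (m + 1)) := by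
      intro p
      induction p with
      | zero => intro j; simp
      | succ p ih =>
        intro j
        rw [pow_succ, Equiv.Perm.mul_apply, finRotate_succ_apply, ih]
        rw [Nat.cast_add, Nat.cast_one, add_assoc, add_comm (1 : Fin (m + 1))]
    constructor
    · rw [hpow]
      have hone : (finRotate (m + 1)) ^ (m + 1) = 1 := by
        apply Equiv.ext
        intro j
        rw [hrotpow]
        simp [Fin.natCast_self]
      rw [hone, mul_one]
    · intro p hp0 hp1 heq
      rw [hpow] at heq
      have hone : (finRotate (m + 1)) ^ p = 1 :=
        mul_left_cancel (heq.trans (mul_one σ).symm)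
      have hc : ((finRotate (m + 1)) ^ p) (0 : Fin (m + 1)) = 0 := by rw [hone]; rfl
      rw [hrotpow] at hc
      simp only [zero_add] at hc
      have hdvd : (m + 1) ∣ p := by
        rwa [Fin.natCast_eq_zero] at hc
      exact absurd (Nat.le_of_dvd hp0 hdvd) (by omega)

/-- The double edges of the cluster graph (one edge per pair of twins) form the graph of
a permutation `f` of the clusters, all of whose cycles have length exactly `n-1`:
the double edges decompose into vertex-disjoint directed cycles of length `n-1`. -/
theorem double_edges_form_cycles (n : ℕ) (hn : 3 ≤ n) :
    ∃ f : Equiv.Perm (Equiv.Perm (Fin (n - 1))),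
      (∀ σ τ : Equiv.Perm (Fin (n - 1)),
        (∃ x y : Equiv.Perm (Fin n), x ≠ y ∧ isEdge x σ τ ∧ isEdge y σ τ ∧
          isTwinEnd (by omega) x ∧ isTwinEnd (by omega) y) ↔ f σ = τ) ∧
      (∀ σ, (f ^ (n - 1)) σ = σ ∧ ∀ m : ℕ, 0 < m → m < n - 1 → (f ^ m) σ ≠ σ) := by
  obtain ⟨m, rfl⟩ : ∃ m, n = m + 2 := ⟨n - 2, by omega⟩
  exact ⟨Equiv.mulRight (finRotate (m + 1)),
    fun σ τ => ⟨forward_dir m σ τ, backward_dir m σ τ⟩,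
    fun σ => power_part m σ⟩
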